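/- Let η be a function ℕ → ℂ with |η(n)| ≤ 1, let r ≥ 3, and set δ = 1/log r. Then (1/e)·∑_{n ≤ r} η(n)/n + ∫_1^r (δ/t^{1+δ}) (∑_{n ≤ t} η(n)/n) dt = ∑_{n ≤ r} η(n)/n^{1+δ}. Consequently, max_{N ≤ r} |∑_{n ≤ N} η(n)/n| ≥ |∑_{n ≤ r} η(n)/n^{1+δ}|. -/

import Mathlib

open Finset Real Complex MeasureTheory intervalIntegral

theorem mellin_truncation_identity (η : ℕ → ℂ) (hη : ∀ n, ‖η n‖ ≤ 1)
    (r : ℕ) (hr : 3 ≤ r) :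
    (1 / Real.exp 1 : ℂ) * (∑ n ∈ Finset.Icc 1 r, η n / n)
        + ∫ t in (1 : ℝ)..(r : ℝ),
            (((1 / Real.log r) / t ^ ((1 : ℝ) + 1 / Real.log r) : ℝ) : ℂ)
              * ∑ n ∈ Finset.Icc 1 ⌊t⌋₊, η n / n
      = ∑ n ∈ Finset.Icc 1 r, η n / ((n : ℝ) ^ ((1 : ℝ) + 1 / Real.log r) : ℝ)
    ∧ ∃ N ∈ Finset.Icc 1 r,
        ‖∑ n ∈ Finset.Icc 1 N, η n / n‖
          ≥ ‖∑ n ∈ Finset.Icc 1 r, η n / ((n : ℝ) ^ ((1 : ℝ) + 1 / Real.log r) : ℝ)‖ := by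
  have hr1 : (1:ℝ) < (r:ℝ) := by
    have : (3:ℝ) ≤ (r:ℝ) := by exact_mod_cast hr
    linarith
  have hrR : (1:ℝ) ≤ (r:ℝ) := hr1.le
  have hlog : 0 < Real.log r := Real.log_pos hr1
  set δ : ℝ := 1 / Real.log r with hδdef
  have hδ : 0 < δ := by positivity
  set g : ℝ → ℝ := fun t => δ / t ^ ((1:ℝ) + δ) with hgdef
  -- continuity of g on positive intervals
  have hgcont : ∀ s : Set ℝ, (∀ t ∈ s, 0 < t) → ContinuousOn g s := by
    intro s hs
    apply ContinuousOn.div continuousOn_const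
    · intro t ht
      exact (Real.continuousAt_rpow_const t _ (Or.inl (hs t ht).ne')).continuousWithinAt
    · intro t ht
      exact (Real.rpow_pos_of_pos (hs t ht) _).ne'
  have hgnonneg : ∀ t : ℝ, 0 < t → 0 ≤ g t := by
    intro t ht
    exact div_nonneg hδ.le (Real.rpow_pos_of_pos ht _).le
  have hgint : ∀ a b : ℝ, 1 ≤ a → a ≤ b → IntervalIntegrable g MeasureTheory.volume a b := by
    intro a b ha hab
    apply ContinuousOn.intervalIntegrable
    apply hgcont
    intro t ht
    rw [Set.uIcc_of_le hab] at ht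
    linarith [ht.1]
  have key : ∀ a b : ℝ, 1 ≤ a → a ≤ b →
      ∫ t in a..b, g t = a ^ (-δ) - b ^ (-δ) := by
    intro a b ha hab
    have h0 : ∀ t ∈ Set.uIcc a b, (0:ℝ) < t := by
      intro t ht
      rw [Set.uIcc_of_le hab] at ht
      linarith [ht.1]
    have hcong : Set.EqOn g (fun t => δ * t ^ (-((1:ℝ) + δ))) (Set.uIcc a b) := by
      intro t ht
      have ht0 := h0 t ht
      simp only [g, Real.rpow_neg ht0.le, div_eq_mul_inv]
    rw [intervalIntegral.integral_congr hcong, intervalIntegral.integral_const_mul,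
      integral_rpow (Or.inr ⟨by intro h; nlinarith [hδ], fun h => by linarith [(h0 0 h)]⟩)]
    have h1 : -((1:ℝ) + δ) + 1 = -δ := by ring
    rw [h1, div_neg, mul_neg, ← mul_div_assoc, mul_div_cancel_left₀ _ hδ.ne']
    ring
  have hrδ : (r:ℝ) ^ (-δ) = 1 / Real.exp 1 := by
    rw [Real.rpow_def_of_pos (by linarith)]
    have h2 : Real.log r * -δ = -1 := by
      rw [hδdef]; field_simp
    rw [h2, Real.exp_neg, one_div]
  set S : ℕ → ℂ := fun N => ∑ n ∈ Finset.Icc 1 N, η n / n with hSdef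
  set F : ℕ → ℝ → ℂ := fun n t => if (n:ℝ) ≤ t then ((g t : ℝ) : ℂ) * (η n / n) else 0
    with hFdef
  have hFind : ∀ n : ℕ, F n
      = (Set.Ici (n:ℝ)).indicator (fun t => ((g t : ℝ) : ℂ) * (η n / n)) := by
    intro n; funext t; simp [F, Set.indicator, Set.mem_Ici]
  have hFint : ∀ (n : ℕ) (a b : ℝ), 1 ≤ a → a ≤ b →
      IntervalIntegrable (F n) MeasureTheory.volume a b := by
    intro n a b ha hab
    have hf : IntervalIntegrable (fun t => ((g t : ℝ) : ℂ) * (η n / n))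
        MeasureTheory.volume a b := by
      apply ContinuousOn.intervalIntegrable
      refine ContinuousOn.mul ?_ continuousOn_const
      exact Complex.continuous_ofReal.comp_continuousOn (hgcont _ (fun t ht => by
        rw [Set.uIcc_of_le hab] at ht; linarith [ht.1]))
    rw [intervalIntegrable_iff] at hf ⊢
    rw [hFind]
    exact (MeasureTheory.integrable_indicator_iff measurableSet_Ici).mpr hf.integrableOn
  have hFval : ∀ n ∈ Finset.Icc 1 r, (∫ t in (1:ℝ)..(r:ℝ), F n t)
      = (((n:ℝ) ^ (-δ) - 1 / Real.exp 1 : ℝ) : ℂ) * (η n / n) := by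
    intro n hn
    rw [Finset.mem_Icc] at hn
    have hn1 : (1:ℝ) ≤ (n:ℝ) := by exact_mod_cast hn.1
    have hnr : (n:ℝ) ≤ (r:ℝ) := by exact_mod_cast hn.2
    have i1 : IntervalIntegrable (F n) MeasureTheory.volume 1 n := hFint n 1 n le_rfl hn1
    have i2 : IntervalIntegrable (F n) MeasureTheory.volume n r := hFint n n r hn1 hnr
    rw [← intervalIntegral.integral_add_adjacent_intervals i1 i2]
    have e1 : (∫ t in (1:ℝ)..(n:ℝ), F n t) = 0 := by
      have hne : ∀ᵐ t : ℝ, t ≠ (n:ℝ) := by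
        refine MeasureTheory.ae_iff.mpr ?_
        simpa using MeasureTheory.measure_singleton ((n:ℝ))
      have hae : ∀ᵐ t : ℝ, t ∈ Set.uIoc (1:ℝ) (n:ℝ) → F n t = 0 := by
        filter_upwards [hne] with t htne ht
        rw [Set.uIoc_of_le hn1] at ht
        have : t < n := lt_of_le_of_ne ht.2 htne
        simp [F, not_le.mpr this]
      rw [intervalIntegral.integral_congr_ae hae]
      simp
    have e2 : (∫ t in (n:ℝ)..(r:ℝ), F n t)
        = (((n:ℝ) ^ (-δ) - 1 / Real.exp 1 : ℝ) : ℂ) * (η n / n) := by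
      have hcong : Set.EqOn (F n) (fun t => ((g t : ℝ) : ℂ) * (η n / n))
          (Set.uIcc (n:ℝ) (r:ℝ)) := by
        intro t ht
        rw [Set.uIcc_of_le hnr] at ht
        simp [F, ht.1]
      rw [intervalIntegral.integral_congr hcong, intervalIntegral.integral_mul_const,
        intervalIntegral.integral_ofReal, key n r hn1 hnr, hrδ]
    rw [e1, e2, zero_add]
  have hmain : (∫ t in (1:ℝ)..(r:ℝ),
        (((1 / Real.log r) / t ^ ((1:ℝ) + 1 / Real.log r) : ℝ) : ℂ)
          * ∑ n ∈ Finset.Icc 1 ⌊t⌋₊, η n / n)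
      = ∑ n ∈ Finset.Icc 1 r, (((n:ℝ) ^ (-δ) - 1 / Real.exp 1 : ℝ) : ℂ) * (η n / n) := by
    have hcong : Set.EqOn
        (fun t => (((1 / Real.log r) / t ^ ((1:ℝ) + 1 / Real.log r) : ℝ) : ℂ)
          * ∑ n ∈ Finset.Icc 1 ⌊t⌋₊, η n / n)
        (fun t => ∑ n ∈ Finset.Icc 1 r, F n t) (Set.uIcc (1:ℝ) (r:ℝ)) := by
      intro t ht
      rw [Set.uIcc_of_le hrR] at ht
      obtain ⟨ht1, htr⟩ := ht
      have ht0 : (0:ℝ) ≤ t := by linarith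
      have hfilter : Finset.filter (fun n : ℕ => (n:ℝ) ≤ t) (Finset.Icc 1 r)
          = Finset.Icc 1 ⌊t⌋₊ := by
        ext m
        simp only [Finset.mem_filter, Finset.mem_Icc, Nat.le_floor_iff ht0]
        constructor
        · rintro ⟨⟨h1, _⟩, h3⟩; exact ⟨h1, h3⟩
        · rintro ⟨h1, h2⟩
          refine ⟨⟨h1, ?_⟩, h2⟩
          exact_mod_cast le_trans h2 htr
      dsimp only
      rw [← hfilter, Finset.sum_filter, Finset.mul_sum]
      refine Finset.sum_congr rfl fun m _ => ?_
      simp only [F, hgdef, hδdef, mul_ite, mul_zero]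
    rw [intervalIntegral.integral_congr hcong,
      intervalIntegral.integral_finset_sum (fun n _ => hFint n 1 r le_rfl hrR)]
    exact Finset.sum_congr rfl hFval
  have hidentity : (1 / Real.exp 1 : ℂ) * (∑ n ∈ Finset.Icc 1 r, η n / n)
        + (∫ t in (1 : ℝ)..(r : ℝ),
            (((1 / Real.log r) / t ^ ((1 : ℝ) + 1 / Real.log r) : ℝ) : ℂ)
              * ∑ n ∈ Finset.Icc 1 ⌊t⌋₊, η n / n)
      = ∑ n ∈ Finset.Icc 1 r, η n / ((n : ℝ) ^ ((1 : ℝ) + 1 / Real.log r) : ℝ) := by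
    rw [hmain, Finset.mul_sum, ← Finset.sum_add_distrib]
    apply Finset.sum_congr rfl
    intro n hn
    rw [Finset.mem_Icc] at hn
    have hn0 : (0:ℝ) < (n:ℝ) := by exact_mod_cast hn.1
    have h1 : ((n:ℝ) ^ ((1:ℝ) + δ)) = (n:ℝ) * (n:ℝ) ^ δ := by
      rw [Real.rpow_add hn0, Real.rpow_one]
    have h2 : ((n:ℝ) ^ (-δ)) = ((n:ℝ) ^ δ)⁻¹ := Real.rpow_neg hn0.le _
    have hne : ((n:ℝ) ^ δ) ≠ 0 := (Real.rpow_pos_of_pos hn0 _).ne'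
    rw [h1, h2]
    have hnne : ((n:ℕ) : ℂ) ≠ 0 := by
      exact_mod_cast (by exact_mod_cast hn0.ne' : (n:ℝ) ≠ 0)
    have hene : ((Real.exp 1 : ℝ) : ℂ) ≠ 0 := by exact_mod_cast (Real.exp_pos 1).ne'
    have h3 : (((n:ℝ) ^ δ : ℝ) : ℂ) ≠ 0 := by exact_mod_cast hne
    push_cast
    field_simp
    ring
  refine ⟨hidentity, ?_⟩
  obtain ⟨N, hN, hmax⟩ := Finset.exists_max_image (Finset.Icc 1 r)
    (fun N => ‖∑ n ∈ Finset.Icc 1 N, η n / n‖)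
    ⟨1, Finset.mem_Icc.mpr ⟨le_rfl, by omega⟩⟩
  refine ⟨N, hN, ?_⟩
  rw [← hidentity]
  set M := ‖∑ n ∈ Finset.Icc 1 N, η n / n‖ with hM
  have hM0 : (0:ℝ) ≤ M := norm_nonneg _
  have hee : 1 / Real.exp 1 ≤ 1 := by
    rw [div_le_one (Real.exp_pos 1)]
    exact Real.one_le_exp (by norm_num)
  have hb1 : ‖(1 / Real.exp 1 : ℂ) * (∑ n ∈ Finset.Icc 1 r, η n / n)‖
      ≤ (1 / Real.exp 1) * M := by
    rw [norm_mul]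
    have hnorm : ‖(1 / Real.exp 1 : ℂ)‖ = 1 / Real.exp 1 := by
      rw [norm_div, norm_one, Complex.norm_real, Real.norm_eq_abs,
        abs_of_pos (Real.exp_pos 1)]
    rw [hnorm]
    exact mul_le_mul_of_nonneg_left
      (hmax r (Finset.mem_Icc.mpr ⟨by omega, le_rfl⟩)) (by positivity)
  have hb2 : ‖∫ t in (1:ℝ)..(r:ℝ),
        (((1 / Real.log r) / t ^ ((1:ℝ) + 1 / Real.log r) : ℝ) : ℂ)
          * ∑ n ∈ Finset.Icc 1 ⌊t⌋₊, η n / n‖ ≤ (1 - 1 / Real.exp 1) * M := by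
    have hbd : ∀ᵐ t ∂(MeasureTheory.volume.restrict (Set.uIoc (1:ℝ) (r:ℝ))),
        ‖(((1 / Real.log r) / t ^ ((1:ℝ) + 1 / Real.log r) : ℝ) : ℂ)
          * ∑ n ∈ Finset.Icc 1 ⌊t⌋₊, η n / n‖ ≤ g t * M := by
      refine (MeasureTheory.ae_restrict_iff' measurableSet_uIoc).mpr
        (Filter.Eventually.of_forall ?_)
      intro t ht
      rw [Set.uIoc_of_le hrR] at ht
      have ht0 : (0:ℝ) < t := by linarith [ht.1]
      have hgt := hgnonneg t ht0
      rw [norm_mul, Complex.norm_real, Real.norm_eq_abs]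
      show |g t| * _ ≤ _
      rw [_root_.abs_of_nonneg hgt]
      refine mul_le_mul_of_nonneg_left ?_ hgt
      apply hmax
      rw [Finset.mem_Icc]
      refine ⟨Nat.le_floor (by exact_mod_cast ht.1.le), ?_⟩
      simpa using Nat.floor_le_of_le ht.2
    have hb := intervalIntegral.norm_integral_le_of_norm_le hrR
      (by simpa only [Set.uIoc_of_le hrR] using
        (MeasureTheory.ae_restrict_iff' measurableSet_uIoc).mp hbd)
      ((hgint 1 r le_rfl hrR).mul_const M)
    rw [intervalIntegral.integral_mul_const, key 1 r le_rfl hrR, Real.one_rpow, hrδ] at hb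
    exact hb
  calc ‖_ + _‖ ≤ _ := norm_add_le _ _
    _ ≤ (1 / Real.exp 1) * M + (1 - 1 / Real.exp 1) * M := add_le_add hb1 hb2
    _ = M := by ring
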